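/- arXiv:dg-ga/9706011 — 2 statements merged into one kernel-verified Lean document; each statement's English description precedes it below -/
import Mathlib

section
/- Let Ω be an open convex domain in ℝ³ and let L be a (possibly infinite) collection of complete affine lines whose union C is closed in ℝ³, and set Ω' = Ω \ C. Let T be a tetrahedron in ℝ³ with faces F₁, F₂, F₃, F₄ such that T° ∪ F₂ ∪ F₃ ∪ F₄ ⊆ Ω'. Then T ⊆ Ω'. -/
set_option maxHeartbeats 2000000 in
/-- Let `Ω ⊆ ℝ³` be an open convex domain, `C` a closed union of complete
affine lines, and `Ω' = Ω \ C`. If a tetrahedron `T` has its interior and the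
faces `F₂, F₃, F₄` contained in `Ω'`, then `T ⊆ Ω'`. -/
theorem stmt_8 {ι : Type*} (Ω : Set (EuclideanSpace ℝ (Fin 3)))
    (hΩo : IsOpen Ω) (hΩc : Convex ℝ Ω)
    (p d : ι → EuclideanSpace ℝ (Fin 3)) (hd : ∀ i, d i ≠ 0)
    (C : Set (EuclideanSpace ℝ (Fin 3)))
    (hC : C = ⋃ i, {x | ∃ t : ℝ, x = p i + t • d i})
    (hCclosed : IsClosed C)
    (v : Fin 4 → EuclideanSpace ℝ (Fin 3)) (hv : AffineIndependent ℝ v)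
    (T : Set (EuclideanSpace ℝ (Fin 3))) (hT : T = convexHull ℝ (Set.range v))
    (F : Fin 4 → Set (EuclideanSpace ℝ (Fin 3)))
    (hF : ∀ i, F i = convexHull ℝ (v '' {j | j ≠ i}))
    (hsub : interior T ∪ F 1 ∪ F 2 ∪ F 3 ⊆ Ω \ C) :
    T ⊆ Ω \ C := by
  classical
  have hint : interior T ⊆ Ω \ C := fun x hx => hsub (Or.inl (Or.inl (Or.inl hx)))
  have hF1 : F 1 ⊆ Ω \ C := fun x hx => hsub (Or.inl (Or.inl (Or.inr hx)))
  have hF2 : F 2 ⊆ Ω \ C := fun x hx => hsub (Or.inl (Or.inr hx))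
  have hF3 : F 3 ⊆ Ω \ C := fun x hx => hsub (Or.inr hx)
  -- vertices belong to faces
  have hvF : ∀ (j i : Fin 4), j ≠ i → v j ∈ F i := by
    intro j i hji
    rw [hF]
    exact subset_convexHull ℝ _ ⟨j, hji, rfl⟩
  have hrange : Set.range v ⊆ Ω := by
    rintro _ ⟨j, rfl⟩
    by_cases hj : j = 1
    · exact (hF2 (hvF j 2 (by simp [hj]))).1
    · exact (hF1 (hvF j 1 hj)).1
  have hTΩ : T ⊆ Ω := by
    rw [hT]; exact convexHull_min hrange hΩc
  -- affine basis
  have htot : affineSpan ℝ (Set.range v) = ⊤ := by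
    rw [hv.affineSpan_eq_top_iff_card_eq_finrank_add_one]
    simp [finrank_euclideanSpace_fin]
  let B : AffineBasis (Fin 4) ℝ (EuclideanSpace ℝ (Fin 3)) := ⟨v, hv, htot⟩
  have hB : ⇑B = v := rfl
  -- all barycentric coordinates nonneg on T
  have hpos : ∀ x ∈ T, ∀ j, 0 ≤ B.coord j x := by
    rw [hT]
    intro x hx j
    have hsubset : convexHull ℝ (Set.range v) ⊆ (B.coord j) ⁻¹' (Set.Ici 0) := by
      apply convexHull_min _ (Convex.affine_preimage _ (convex_Ici 0))
      rintro _ ⟨i, rfl⟩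
      rcases eq_or_ne j i with h | h
      · have : B.coord j (B i) = 1 := by rw [h]; exact B.coord_apply_eq i
        simp only [hB] at this
        simp [Set.mem_preimage, this]
      · have : B.coord j (B i) = 0 := B.coord_apply_ne h
        simp only [hB] at this
        simp [Set.mem_preimage, this]
    exact hsubset hx
  -- nonneg coords imply membership in T
  have hmemT : ∀ x, (∀ j, 0 ≤ B.coord j x) → x ∈ T := by
    intro x hx
    have h1 : ∑ j, B.coord j x = 1 := B.sum_coord_apply_eq_one x
    have h2 := affineCombination_mem_convexHull (s := Finset.univ) (v := v)
      (w := fun j => B.coord j x) (fun j _ => hx j) h1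
    have h3 : Finset.univ.affineCombination ℝ v (fun j => B.coord j x) = x :=
      B.affineCombination_coord_eq_self x
    rw [hT]
    rwa [h3] at h2
  -- zero coordinate implies membership in corresponding face
  have hft : ∀ x ∈ T, ∀ j, B.coord j x = 0 → x ∈ F j := by
    intro x hxT j hj0
    have hsum1 : ∑ i, B.coord i x = 1 := B.sum_coord_apply_eq_one x
    have hx : x = ∑ i, B.coord i x • v i := by
      conv_lhs => rw [← B.affineCombination_coord_eq_self x]
      rw [Finset.affineCombination_eq_linear_combination _ _ _ hsum1]
      rfl
    have hsum : ∑ i ∈ Finset.univ.erase j, B.coord i x = 1 := by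
      rw [Finset.sum_erase_eq_sub (Finset.mem_univ j), hsum1, hj0, sub_zero]
    have hx2 : x = (Finset.univ.erase j).centerMass (fun i => B.coord i x) v := by
      rw [Finset.centerMass_eq_of_sum_1 _ _ hsum,
        Finset.sum_erase_eq_sub (Finset.mem_univ j), hj0, zero_smul, sub_zero]
      exact hx
    rw [hx2, hF]
    refine Finset.centerMass_mem_convexHull _ (fun i _ => hpos x hxT i)
      (by rw [hsum]; norm_num) (fun i hi => ⟨i, (Finset.mem_erase.mp hi).1, rfl⟩)
  -- interior characterization
  have hintT : interior T = {x | ∀ j, 0 < B.coord j x} := by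
    rw [hT]; exact B.interior_convexHull
  -- points of T ∩ C have zeroth coordinate 0
  have hzero : ∀ x ∈ T, x ∈ C → B.coord 0 x = 0 := by
    intro x hxT hxC
    have hnint : x ∉ interior T := fun h => (hint h).2 hxC
    have hex : ∃ j, B.coord j x = 0 := by
      by_contra h
      push_neg at h
      exact hnint (by rw [hintT]; exact fun j => (hpos x hxT j).lt_of_ne (Ne.symm (h j)))
    obtain ⟨j, hj⟩ := hex
    have hxFj := hft x hxT j hj
    fin_cases j
    · exact hj
    · exact absurd hxC (hF1 hxFj).2
    · exact absurd hxC (hF2 hxFj).2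
    · exact absurd hxC (hF3 hxFj).2
  -- main argument
  intro x hxT
  refine ⟨hTΩ hxT, ?_⟩
  intro hxC
  rw [hC] at hxC
  obtain ⟨Si, ⟨i, rfl⟩, t0, hx_eq⟩ := hxC
  set q := p i with hq
  set e := d i with he'
  have he : e ≠ 0 := hd i
  have hlineC : ∀ t : ℝ, q + t • e ∈ C := by
    intro t
    rw [hC]
    exact Set.mem_iUnion.mpr ⟨i, t, rfl⟩
  have hTcl : IsClosed T := by
    rw [hT]; exact (Set.Finite.isCompact_convexHull (𝕜 := ℝ) (Set.finite_range v)).isClosed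
  obtain ⟨R, hR⟩ : ∃ R, ∀ y ∈ T, ‖y‖ ≤ R := by
    rw [hT]
    exact ((Set.Finite.isCompact_convexHull (𝕜 := ℝ) (Set.finite_range v)).isBounded).exists_norm_le
  set S : Set ℝ := {t : ℝ | q + t • e ∈ T} with hS
  have hScl : IsClosed S :=
    hTcl.preimage (continuous_const.add (continuous_id.smul continuous_const))
  have hSne : t0 ∈ S := by
    show q + t0 • e ∈ T
    rw [← hx_eq]; exact hxT
  have hSbdd : BddAbove S := by
    refine ⟨(R + ‖q‖) / ‖e‖, fun t ht => ?_⟩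
    have h1 : ‖q + t • e‖ ≤ R := hR _ ht
    have h2 : ‖t • e‖ ≤ R + ‖q‖ := by
      have : t • e = (q + t • e) - q := by abel
      rw [this]
      calc ‖(q + t • e) - q‖ ≤ ‖q + t • e‖ + ‖q‖ := norm_sub_le _ _
        _ ≤ R + ‖q‖ := by linarith
    rw [norm_smul] at h2
    have hepos : 0 < ‖e‖ := norm_pos_iff.mpr he
    have : |t| ≤ (R + ‖q‖) / ‖e‖ := by
      rw [le_div_iff₀ hepos]
      simpa using h2
    exact (le_abs_self t).trans this
  set b0 : ℝ := sSup S with hb0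
  have hb0S : b0 ∈ S := hScl.csSup_mem ⟨t0, hSne⟩ hSbdd
  set c : Fin 4 → ℝ := fun j => (B.coord j).linear e with hc
  have hw : ∀ (j : Fin 4) (t : ℝ), B.coord j (q + t • e) = B.coord j q + t * c j := by
    intro j t
    have h1 : q + t • e = t • e +ᵥ q := by rw [vadd_eq_add, add_comm]
    rw [h1, AffineMap.map_vadd, map_smul, vadd_eq_add, smul_eq_mul, hc]
    ring
  have hw0S : ∀ t ∈ S, B.coord 0 q + t * c 0 = 0 := by
    intro t ht
    rw [← hw]
    exact hzero _ ht (hlineC t)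
  -- choose a side
  obtain ⟨s, hs, hnotT, hw0⟩ : ∃ s : ℝ, (s = 1 ∨ s = -1) ∧
      (∀ u : ℝ, 0 < u → q + (b0 + s * u) • e ∉ T) ∧
      (∀ u : ℝ, 0 < u → 0 ≤ B.coord 0 (q + (b0 + s * u) • e)) := by
    have h2 : B.coord 0 q + b0 * c 0 = 0 := hw0S b0 hb0S
    by_cases hSc : ∃ a ∈ S, a ≠ b0
    · obtain ⟨a, haS, hane⟩ := hSc
      have h1 : B.coord 0 q + a * c 0 = 0 := hw0S a haS
      have h3 : (a - b0) * c 0 = 0 := by linear_combination h1 - h2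
      have hc0 : c 0 = 0 := (mul_eq_zero.mp h3).resolve_left (sub_ne_zero.mpr hane)
      refine ⟨1, Or.inl rfl, ?_, ?_⟩
      · intro u hu hmem
        have : b0 + 1 * u ∈ S := hmem
        have := le_csSup hSbdd this
        linarith
      · intro u hu
        rw [hw, hc0]
        rw [hc0] at h2
        linarith
    · push_neg at hSc
      have hSsing : ∀ t : ℝ, t ≠ b0 → q + t • e ∉ T := fun t ht hmem => ht (hSc t hmem)
      by_cases hcs : 0 ≤ c 0
      · refine ⟨1, Or.inl rfl, fun u hu => hSsing _ (by intro h; nlinarith), ?_⟩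
        intro u hu
        rw [hw]
        nlinarith
      · refine ⟨-1, Or.inr rfl, fun u hu => hSsing _ (by intro h; nlinarith), ?_⟩
        intro u hu
        rw [hw]
        nlinarith
  -- derive a zero coordinate with nonzero index at b0
  have hkey : ∃ j : Fin 4, j ≠ 0 ∧ B.coord j (q + b0 • e) = 0 := by
    by_contra h
    push_neg at h
    have hjpos : ∀ j : Fin 4, j ≠ 0 → 0 < B.coord j (q + b0 • e) :=
      fun j hj => (hpos _ hb0S j).lt_of_ne (Ne.symm (h j hj))
    set f : Fin 4 → ℝ := fun j => B.coord j (q + b0 • e) / (|c j| + 1) with hf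
    have hfpos : ∀ j : Fin 4, j ≠ 0 → 0 < f j := by
      intro j hj
      exact div_pos (hjpos j hj) (by positivity)
    set ε : ℝ := min (min (f 1) (f 2)) (f 3) with hε'
    have hε : 0 < ε :=
      lt_min (lt_min (hfpos 1 (by decide)) (hfpos 2 (by decide))) (hfpos 3 (by decide))
    apply hnotT ε hε
    apply hmemT
    intro j
    by_cases hj : j = 0
    · rw [hj]; exact hw0 ε hε
    · have hεle : ε ≤ f j := by
        fin_cases j
        · exact absurd rfl hj
        · exact (min_le_left _ _).trans (min_le_left _ _)
        · exact (min_le_left _ _).trans (min_le_right _ _)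
        · exact min_le_right _ _
      have hgood : ε * (|c j| + 1) ≤ B.coord j (q + b0 • e) := by
        rw [← le_div_iff₀ (by positivity : (0:ℝ) < |c j| + 1)]
        exact hεle
      have hbase : B.coord j q + b0 * c j = B.coord j (q + b0 • e) := (hw j b0).symm
      have hscj : -|c j| ≤ s * c j := by
        rcases hs with rfl | rfl
        · simpa using neg_abs_le (c j)
        · simpa using neg_le_neg (le_abs_self (c j))
      rw [hw]
      nlinarith [abs_nonneg (c j)]
  obtain ⟨j, hj0, hjz⟩ := hkey
  have hFj : q + b0 • e ∈ F j := hft _ hb0S j hjz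
  have hmem : q + b0 • e ∈ Ω \ C := by
    fin_cases j
    · exact absurd rfl hj0
    · exact hF1 hFj
    · exact hF2 hFj
    · exact hF3 hFj
  exact hmem.2 (hlineC b0)
end

section
/- Let T be a 3-simplex in ℝ³ that is contained in the open unit ball B = {x : ‖x‖ < 1}, and let ℓ be a chord of B, i.e., a closed segment whose two endpoints lie on the unit sphere ∂B. If ℓ meets T, then ℓ is not contained in the relative interior of any single 2-dimensional face of T; moreover if ℓ ∩ T is contained in a face F of T then ℓ ∩ T is not contained in the relative interior F° of F. -/
open Metric

private lemma aff3' {E : Type*} [AddCommGroup E] [Module ℝ E]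
    (g : E →ᵃ[ℝ] ℝ) {a c d : ℝ} (h : a + c + d = 1) (u w z : E) :
    g (a • u + c • w + d • z) = a * g u + c * g w + d * g z := by
  have key : ∀ x : E, g x = g.linear x + g 0 := fun x => by
    conv_lhs => rw [show x = x +ᵥ (0 : E) by simp]
    rw [g.map_vadd]
    rfl
  rw [key, key u, key w, key z, map_add, map_add, map_smul, map_smul, map_smul]
  simp only [smul_eq_mul]
  have hd : d = 1 - a - c := by linarith
  subst hd
  ring

private lemma comb_mem_span' {E : Type*} [AddCommGroup E] [Module ℝ E]
    {ι : Type*} (s : Finset ι) (w : ι → ℝ) (hw : ∑ j ∈ s, w j = 1) (p : ι → E) :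
    s.affineCombination ℝ p w ∈ affineSpan ℝ (p '' ↑s) := by
  classical
  have h1 : s.attach.map (Function.Embedding.subtype _) = s := Finset.attach_map_val
  have hsum : ∑ j ∈ s.attach, (w ∘ (Function.Embedding.subtype fun j => j ∈ s)) j = 1 := by
    show ∑ j ∈ s.attach, w ↑j = 1
    rw [Finset.sum_attach s w]
    exact hw
  have hmem := affineCombination_mem_affineSpan hsum
    (p ∘ (Function.Embedding.subtype fun j => j ∈ s))
  have hrange : Set.range (p ∘ (Function.Embedding.subtype fun j => j ∈ s)) = p '' ↑s := by
    rw [Set.range_comp]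
    exact congrArg (Set.image p) (Subtype.range_coe (s := (↑s : Set ι)))
  rw [hrange] at hmem
  have h2 : s.affineCombination ℝ p w =
      s.attach.affineCombination ℝ (p ∘ (Function.Embedding.subtype fun j => j ∈ s))
        (w ∘ (Function.Embedding.subtype fun j => j ∈ s)) := by
    conv_lhs => rw [← h1]
    exact Finset.affineCombination_map _ _ _ _
  rw [h2]
  exact hmem

private lemma relint_ball' {E : Type*} [NormedAddCommGroup E] [NormedSpace ℝ E]
    {F : Set E} {y : E} (hy : y ∈ intrinsicInterior ℝ F) :
    ∃ ε > 0, ∀ z, z ∈ affineSpan ℝ F → dist z y < ε → z ∈ F := by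
  obtain ⟨y', hy', rfl⟩ := mem_intrinsicInterior.mp hy
  obtain ⟨ε, hε, hball⟩ := Metric.isOpen_iff.mp isOpen_interior y' hy'
  refine ⟨ε, hε, fun z hz hd => ?_⟩
  have hm : (⟨z, hz⟩ : affineSpan ℝ F) ∈ Metric.ball y' ε := by
    rwa [mem_ball, Subtype.dist_eq]
  have h2 : (⟨z, hz⟩ : affineSpan ℝ F) ∈ Subtype.val ⁻¹' F := interior_subset (hball hm)
  exact h2

set_option maxHeartbeats 1000000

/-- Let `T` be a 3-simplex contained in the open unit ball of `ℝ³` and let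
`ℓ` be a chord of the ball (a segment whose endpoints lie on the unit sphere)
meeting `T`.  Then `ℓ` is not contained in the relative interior of any
2-dimensional face of `T`; moreover if `ℓ ∩ T` lies in a face `F` of `T`,
then `ℓ ∩ T` is not contained in the relative interior `F°`. -/
theorem stmt_15 (v : Fin 4 → EuclideanSpace ℝ (Fin 3))
    (hv : AffineIndependent ℝ v)
    (T : Set (EuclideanSpace ℝ (Fin 3))) (hT : T = convexHull ℝ (Set.range v))
    (hTball : T ⊆ ball (0 : EuclideanSpace ℝ (Fin 3)) 1)
    (p q : EuclideanSpace ℝ (Fin 3)) (hp : ‖p‖ = 1) (hq : ‖q‖ = 1)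
    (ℓ : Set (EuclideanSpace ℝ (Fin 3))) (hℓ : ℓ = segment ℝ p q)
    (F : Fin 4 → Set (EuclideanSpace ℝ (Fin 3)))
    (hF : ∀ i, F i = convexHull ℝ (v '' {j | j ≠ i}))
    (hmeet : (ℓ ∩ T).Nonempty) :
    (∀ i : Fin 4, ¬ ℓ ⊆ intrinsicInterior ℝ (F i)) ∧
      (∀ i : Fin 4, ℓ ∩ T ⊆ F i → ¬ ℓ ∩ T ⊆ intrinsicInterior ℝ (F i)) := by
  classical
  subst hℓ
  have hE3 : Fintype.card (Fin 4) = Module.finrank ℝ (EuclideanSpace ℝ (Fin 3)) + 1 := by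
    simp [finrank_euclideanSpace_fin]
  have htop : affineSpan ℝ (Set.range v) = ⊤ :=
    hv.affineSpan_eq_top_iff_card_eq_finrank_add_one.mpr hE3
  set b : AffineBasis (Fin 4) ℝ (EuclideanSpace ℝ (Fin 3)) := ⟨v, hv, htop⟩ with hbdef
  have hTconv : Convex ℝ T := hT ▸ convex_convexHull ℝ _
  have hTclosed : IsClosed T := hT ▸ ((Set.finite_range v).isCompact_convexHull ℝ).isClosed
  have hvT : ∀ j, v j ∈ T := fun j => hT ▸ subset_convexHull ℝ _ (Set.mem_range_self j)
  have hFT : ∀ i, F i ⊆ T := fun i => by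
    rw [hF i, hT]; exact convexHull_mono (Set.image_subset_range _ _)
  have hpT : p ∉ T := fun h => by
    have := mem_ball_zero_iff.mp (hTball h); rw [hp] at this; linarith
  have hqT : q ∉ T := fun h => by
    have := mem_ball_zero_iff.mp (hTball h); rw [hq] at this; linarith
  have hg0 : ∀ (i : Fin 4) x, x ∈ F i → b.coord i x = 0 := by
    intro i x hx
    rw [hF i] at hx
    have h1 : b.coord i x ∈ convexHull ℝ (b.coord i '' (v '' {j | j ≠ i})) := by
      rw [← AffineMap.image_convexHull]
      exact Set.mem_image_of_mem _ hx
    have h2 : b.coord i '' (v '' {j | j ≠ i}) ⊆ {(0 : ℝ)} := by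
      rintro _ ⟨_, ⟨j, hj, rfl⟩, rfl⟩
      exact Set.mem_singleton_iff.mpr (b.coord_apply_ne fun h => hj h.symm)
    have h3 := convexHull_mono h2 h1
    rwa [convexHull_singleton, Set.mem_singleton_iff] at h3
  have hspan : ∀ (i : Fin 4) x, b.coord i x = 0 → x ∈ affineSpan ℝ (F i) := by
    intro i x hx
    have h1 : affineSpan ℝ (F i) = affineSpan ℝ (v '' {j | j ≠ i}) := by
      rw [hF i, affineSpan_convexHull]
    rw [h1]
    set w : Fin 4 → ℝ := fun j => b.coord j x with hw
    have hrep : Finset.univ.affineCombination ℝ v w = x := b.affineCombination_coord_eq_self x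
    have hcomb : (Finset.univ.erase i).affineCombination ℝ v w = x := by
      rw [Finset.affineCombination_indicator_subset w v
        (Finset.erase_subset i Finset.univ)]
      have hind : Set.indicator ↑(Finset.univ.erase i) w = w := by
        funext j
        by_cases hj : j = i
        · subst hj
          have hni : j ∉ (↑(Finset.univ.erase j) : Set (Fin 4)) := by simp
          rw [Set.indicator_of_notMem hni]
          exact hx.symm
        · have hmi : j ∈ (↑(Finset.univ.erase i) : Set (Fin 4)) := by simp [hj]
          rw [Set.indicator_of_mem hmi]
      rw [hind, hrep]
    have hsum : ∑ j ∈ Finset.univ.erase i, w j = 1 := by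
      rw [Finset.sum_erase _ (show w i = 0 from hx)]
      exact b.sum_coord_apply_eq_one x
    have hm := comb_mem_span' (Finset.univ.erase i) w hsum v
    rw [hcomb] at hm
    have hset : v '' ↑(Finset.univ.erase i) = v '' {j | j ≠ i} := by
      congr 1
      ext j; simp
    rwa [hset] at hm
  have hIoo' : ∀ᶠ t in nhdsWithin 0 (Set.Ioi (0 : ℝ)), t ∈ Set.Ioo (0 : ℝ) 1 :=
    Filter.eventually_mem_set.mpr (Ioo_mem_nhdsGT_of_mem (Set.left_mem_Ico.mpr one_pos))
  -- key cone lemma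
  have key : ∀ (i : Fin 4) (y x : EuclideanSpace ℝ (Fin 3)),
      y ∈ intrinsicInterior ℝ (F i) → 0 ≤ b.coord i x →
      ∀ᶠ t in nhdsWithin 0 (Set.Ioi (0 : ℝ)), (1 - t) • y + t • x ∈ T := by
    intro i y x hy hxc
    obtain ⟨ε, hε, hball⟩ := relint_ball' hy
    have hy0 : b.coord i y = 0 := hg0 i y (intrinsicInterior_subset hy)
    set c := b.coord i x with hc
    set f : ℝ → EuclideanSpace ℝ (Fin 3) :=
      fun t => (1 - t * c)⁻¹ • ((1 - t) • y + t • x - (t * c) • v i) with hfdef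
    have hf0 : f 0 = y := by simp [hfdef]
    have hfc : ContinuousAt f 0 := by
      refine ContinuousAt.smul (f := fun t : ℝ => (1 - t * c)⁻¹)
        (g := fun t : ℝ => (1 - t) • y + t • x - (t * c) • v i) ?_ ?_
      · exact (continuousAt_const.sub (continuousAt_id.mul continuousAt_const)).inv₀
          (by norm_num)
      · fun_prop
    have h1 : ∀ᶠ t in nhds (0 : ℝ), dist (f t) y < ε := by
      have := hfc.eventually_mem (Metric.ball_mem_nhds (f 0) hε)
      simpa [hf0, Metric.mem_ball] using this
    have h2 : ∀ᶠ t in nhds (0 : ℝ), t * c < 1 / 2 := by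
      have hcont : ContinuousAt (fun t : ℝ => t * c) 0 := by fun_prop
      have := hcont.eventually_mem (Iio_mem_nhds (show (0 : ℝ) * c < 1 / 2 by norm_num))
      simpa using this
    have h12 := (h1.and h2).filter_mono (nhdsWithin_le_nhds (s := Set.Ioi (0:ℝ)))
    filter_upwards [h12, self_mem_nhdsWithin] with t ht htpos
    obtain ⟨hdist, hhalf⟩ := ht
    replace htpos : 0 < t := htpos
    have htc0 : 0 ≤ t * c := mul_nonneg htpos.le hxc
    have hne : 1 - t * c ≠ 0 := by linarith
    have hfcomb : f t = ((1 - t * c)⁻¹ * (1 - t)) • y + ((1 - t * c)⁻¹ * t) • x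
        + ((1 - t * c)⁻¹ * (-(t * c))) • v i := by
      simp only [hfdef]
      module
    have hsum1 : (1 - t * c)⁻¹ * (1 - t) + (1 - t * c)⁻¹ * t
        + (1 - t * c)⁻¹ * (-(t * c)) = 1 := by
      field_simp
      ring
    have hcoordf : b.coord i (f t) = 0 := by
      rw [hfcomb, aff3' (b.coord i) hsum1, hy0, ← hc,
        show (b.coord i) (v i) = 1 from b.coord_apply_eq i]
      ring
    have hfF : f t ∈ F i := hball _ (hspan i _ hcoordf) hdist
    have hzeq : (1 - t) • y + t • x = (1 - t * c) • f t + (t * c) • v i := by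
      simp only [hfdef]
      rw [smul_inv_smul₀ hne]
      abel
    rw [hzeq]
    exact hTconv (hFT i hfF) (hvT i) (by linarith) htc0 (by ring)
  -- main second bullet
  have main : ∀ i : Fin 4, ¬ segment ℝ p q ∩ T ⊆ intrinsicInterior ℝ (F i) := by
    intro i hrel
    obtain ⟨y, hyl, hyT⟩ := hmeet
    have hyF : y ∈ intrinsicInterior ℝ (F i) := hrel ⟨hyl, hyT⟩
    have hyF' : b.coord i y = 0 := hg0 i y (intrinsicInterior_subset hyF)
    have dircase : ∀ x, x ∈ segment ℝ p q → ¬(0 < b.coord i x) := by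
      intro x hxseg hxpos
      have hev := key i y x hyF hxpos.le
      obtain ⟨t, htT, ht0, ht1⟩ : ∃ t : ℝ, ((1 - t) • y + t • x ∈ T) ∧ 0 < t ∧ t < 1 := by
        obtain ⟨t, h1, h2⟩ := (hev.and hIoo').exists
        exact ⟨t, h1, h2.1, h2.2⟩
      have hzseg : (1 - t) • y + t • x ∈ segment ℝ p q :=
        (convex_segment p q) hyl hxseg (by linarith) ht0.le (by ring)
      have hmem : (1 - t) • y + t • x ∈ intrinsicInterior ℝ (F i) := hrel ⟨hzseg, htT⟩
      have h0 : b.coord i ((1 - t) • y + t • x) = 0 :=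
        hg0 i _ (intrinsicInterior_subset hmem)
      have hcomp : b.coord i ((1 - t) • y + t • x) = t * b.coord i x := by
        have h := aff3' (b.coord i) (show (1 - t) + t + (0 : ℝ) = 1 by ring) y x
          (0 : EuclideanSpace ℝ (Fin 3))
        simp only [zero_smul, add_zero, zero_mul] at h
        rw [h, hyF']
        ring
      rw [hcomp] at h0
      nlinarith
    have hpF : ¬(0 < b.coord i p) := dircase p (left_mem_segment ℝ p q)
    have hqF : ¬(0 < b.coord i q) := dircase q (right_mem_segment ℝ p q)
    push_neg at hpF hqF
    obtain ⟨s, hsI, hys⟩ : ∃ s ∈ Set.Icc (0 : ℝ) 1, (1 - s) • p + s • q = y := by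
      rw [segment_eq_image] at hyl
      exact hyl
    have hcoordy : (1 - s) * b.coord i p + s * b.coord i q = 0 := by
      have h := aff3' (b.coord i) (show (1 - s) + s + (0 : ℝ) = 1 by ring) p q
        (0 : EuclideanSpace ℝ (Fin 3))
      simp only [zero_smul, add_zero, zero_mul] at h
      rw [hys, hyF'] at h
      linarith
    have hs0 : s ≠ 0 := by
      rintro rfl
      apply hpT
      have hyp : y = p := by rw [← hys]; simp
      exact hyp ▸ hyT
    have hs1 : s ≠ 1 := by
      rintro rfl
      apply hqT
      have hyq : y = q := by rw [← hys]; simp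
      exact hyq ▸ hyT
    have h1 : (1 - s) * b.coord i p ≤ 0 :=
      mul_nonpos_of_nonneg_of_nonpos (by linarith [hsI.2]) hpF
    have h2 : s * b.coord i q ≤ 0 := mul_nonpos_of_nonneg_of_nonpos hsI.1 hqF
    have hgp : b.coord i p = 0 := by
      have e1 : (1 - s) * b.coord i p = 0 := by linarith
      rcases mul_eq_zero.mp e1 with h | h
      · exact absurd (show s = 1 by linarith) hs1
      · exact h
    have hgq : b.coord i q = 0 := by
      have e1 : s * b.coord i q = 0 := by linarith
      rcases mul_eq_zero.mp e1 with h | h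
      · exact absurd h hs0
      · exact h
    -- the chord lies in the plane of the face: exit-point argument
    set φ : ℝ → EuclideanSpace ℝ (Fin 3) := fun u => (1 - u) • p + u • q with hφ
    set S : Set ℝ := {u | u ∈ Set.Icc (0 : ℝ) 1 ∧ φ u ∈ T} with hS
    have hφc : Continuous φ := by fun_prop
    have hSc : IsClosed S := by
      have he : S = Set.Icc 0 1 ∩ φ ⁻¹' T := rfl
      rw [he]; exact isClosed_Icc.inter (hTclosed.preimage hφc)
    have hScpt : IsCompact S := isCompact_Icc.of_isClosed_subset hSc fun u hu => hu.1
    have hSne : S.Nonempty := ⟨s, hsI, by show φ s ∈ T; rw [show φ s = y from hys]; exact hyT⟩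
    set s₀ := sSup S with hs₀def
    have hs₀S : s₀ ∈ S := hScpt.sSup_mem hSne
    have hs₀1 : s₀ < 1 := by
      rcases lt_or_eq_of_le hs₀S.1.2 with h | h
      · exact h
      · exfalso
        apply hqT
        have hq1 : φ s₀ = q := by rw [hφ, h]; simp
        exact hq1 ▸ hs₀S.2
    set y₀ := φ s₀ with hy₀def
    have hy₀seg : y₀ ∈ segment ℝ p q := by
      rw [segment_eq_image]
      exact ⟨s₀, hs₀S.1, rfl⟩
    have hy₀F : y₀ ∈ intrinsicInterior ℝ (F i) := hrel ⟨hy₀seg, hs₀S.2⟩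
    have hy₀c : b.coord i y₀ = 0 := hg0 i _ (intrinsicInterior_subset hy₀F)
    obtain ⟨ε, hε, hball⟩ := relint_ball' hy₀F
    set z : ℝ → EuclideanSpace ℝ (Fin 3) := fun t => (1 - t) • y₀ + t • q with hz
    have hzc : ContinuousAt z 0 := by fun_prop
    have hz0 : z 0 = y₀ := by simp [hz]
    have h1' : ∀ᶠ t in nhds (0 : ℝ), dist (z t) y₀ < ε := by
      have := hzc.eventually_mem (Metric.ball_mem_nhds (z 0) hε)
      simpa [hz0, Metric.mem_ball] using this
    obtain ⟨t, hdist, ht01⟩ := ((h1'.filter_mono (nhdsWithin_le_nhds (s := Set.Ioi (0:ℝ)))).and hIoo').exists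
    have hztc : b.coord i (z t) = 0 := by
      have h := aff3' (b.coord i) (show (1 - t) + t + (0 : ℝ) = 1 by ring) y₀ q
        (0 : EuclideanSpace ℝ (Fin 3))
      simp only [zero_smul, add_zero, zero_mul] at h
      rw [show z t = (1 - t) • y₀ + t • q from rfl, h, hy₀c, hgq]
      ring
    have hzF : z t ∈ F i := hball _ (hspan i _ hztc) hdist
    have hzT : z t ∈ T := hFT i hzF
    have hu : z t = φ (s₀ + t * (1 - s₀)) := by
      simp only [hz, hy₀def, hφ]
      module
    have huS : (s₀ + t * (1 - s₀)) ∈ S := by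
      refine ⟨⟨?_, ?_⟩, ?_⟩
      · nlinarith [hs₀S.1.1, ht01.1, hs₀1]
      · nlinarith [ht01.2, hs₀S.1.1]
      · rw [← hu]; exact hzT
    have hle : s₀ + t * (1 - s₀) ≤ s₀ := le_csSup hScpt.bddAbove huS
    nlinarith [ht01.1, hs₀1]
  refine ⟨?_, fun i _ => main i⟩
  intro i hsub
  have hpF : p ∈ F i := intrinsicInterior_subset (hsub (left_mem_segment ℝ p q))
  have := mem_ball_zero_iff.mp (hTball (hFT i hpF))
  rw [hp] at this
  linarith
end
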